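/- arXiv:2505.14641 — 3 statements merged into one kernel-verified Lean document; each statement's English description precedes it below -/
import Mathlib

section
/- Let d ≥ 2 and q ≥ 2 be natural numbers and let U be a subset of the vertices of the Hamming graph H(d,q). If the VC-dimension of (U, n(U)) is at least 3, then either some rectilinear line contains at least four vertices of U, or U contains a rectangle. -/
def hammingAdj {d q : ℕ} (t : ℕ) (x y : Fin d → ZMod q) : Prop :=
  (Finset.univ.filter fun i => x i ≠ y i).card = t

def Shatters {d q : ℕ} (t : ℕ) (U W : Finset (Fin d → ZMod q)) : Prop :=
  ∀ S ⊆ W, ∃ u ∈ U, ∀ w ∈ W, (w ∈ S ↔ hammingAdj t u w)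

lemma hammingAdj_one_iff {d q : ℕ} {u w : Fin d → ZMod q} :
    hammingAdj 1 u w ↔ ∃ i, u i ≠ w i ∧ ∀ k, k ≠ i → u k = w k := by
  unfold hammingAdj
  rw [Finset.card_eq_one]
  constructor
  · rintro ⟨i, hi⟩
    refine ⟨i, ?_, ?_⟩
    · have hmem : i ∈ Finset.univ.filter fun k => u k ≠ w k := by
        rw [hi]; exact Finset.mem_singleton_self i
      exact (Finset.mem_filter.mp hmem).2
    · intro k hk
      by_contra h
      have : k ∈ ({i} : Finset (Fin d)) :=
        hi ▸ Finset.mem_filter.mpr ⟨Finset.mem_univ k, h⟩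
      exact hk (Finset.mem_singleton.mp this)
  · rintro ⟨i, h1, h2⟩
    refine ⟨i, ?_⟩
    ext k
    simp only [Finset.mem_filter, Finset.mem_univ, true_and, Finset.mem_singleton]
    constructor
    · intro h; by_contra hk; exact h (h2 k hk)
    · rintro rfl; exact h1

/-- Rectangle case: two of the shattered points differ from `u` in distinct coords. -/
lemma rect_case {d q : ℕ} (U W : Finset (Fin d → ZMod q))
    (hWU : W ⊆ U) (hSh : Shatters 1 U W)
    (u : Fin d → ZMod q) (hu : u ∈ U)
    (w w' w'' : Fin d → ZMod q) (hw : w ∈ W) (hw' : w' ∈ W) (hw'' : w'' ∈ W)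
    (hne1 : w'' ≠ w) (hne2 : w'' ≠ w')
    (huw'' : hammingAdj 1 u w'')
    (i j : Fin d) (hij : i ≠ j)
    (hwi : u i ≠ w i) (hwout : ∀ k, k ≠ i → u k = w k)
    (hw'j : u j ≠ w' j) (hw'out : ∀ k, k ≠ j → u k = w' k) :
    ∃ (i j : Fin d), i ≠ j ∧ ∃ (a b c e : ZMod q), a ≠ b ∧ c ≠ e ∧
      ∃ base : Fin d → ZMod q,
        (fun k => if k = i then a else if k = j then c else base k) ∈ U ∧
        (fun k => if k = i then a else if k = j then e else base k) ∈ U ∧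
        (fun k => if k = i then b else if k = j then c else base k) ∈ U ∧
        (fun k => if k = i then b else if k = j then e else base k) ∈ U := by
  classical
  obtain ⟨u', hu', hu'prop⟩ := hSh {w, w'} (by
    intro x hx
    rcases Finset.mem_insert.mp hx with rfl | hx
    · exact hw
    · exact Finset.mem_singleton.mp hx ▸ hw')
  have hadjw : hammingAdj 1 u' w :=
    (hu'prop w hw).mp (Finset.mem_insert_self _ _)
  have hadjw' : hammingAdj 1 u' w' :=
    (hu'prop w' hw').mp (by simp)
  have hnadj : ¬ hammingAdj 1 u' w'' := by
    intro h
    have := (hu'prop w'' hw'').mpr h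
    rcases Finset.mem_insert.mp this with rfl | h'
    · exact hne1 rfl
    · exact hne2 (Finset.mem_singleton.mp h')
  have hu'u : u' ≠ u := by
    rintro rfl; exact hnadj huw''
  obtain ⟨k1, hk1, hk1out⟩ := hammingAdj_one_iff.mp hadjw
  obtain ⟨k2, hk2, hk2out⟩ := hammingAdj_one_iff.mp hadjw'
  -- w and w' differ at i and at j
  have hwwi : w i ≠ w' i := fun h => hwi (h ▸ hw'out i hij)
  have hwwj : w j ≠ w' j := fun h => hw'j ((hwout j (Ne.symm hij)).symm ▸ h)
  have hik : i = k1 ∨ i = k2 := by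
    by_contra h
    push_neg at h
    exact hwwi ((hk1out i h.1).symm.trans (hk2out i h.2))
  have hjk : j = k1 ∨ j = k2 := by
    by_contra h
    push_neg at h
    exact hwwj ((hk1out j h.1).symm.trans (hk2out j h.2))
  rcases hik with hi1 | hi2 <;> rcases hjk with hj1 | hj2
  · exact absurd (hi1.trans hj1.symm) hij
  · -- i = k1, j = k2 : u' = u, contradiction
    exfalso
    apply hu'u
    funext k
    by_cases hk : k = i
    · subst hk
      have hne : k ≠ k2 := hj2 ▸ hij
      exact (hk2out k hne).trans (hw'out k hij).symm
    · have hne : k ≠ k1 := hi1 ▸ hk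
      exact (hk1out k hne).trans (hwout k hk).symm
  · -- i = k2, j = k1 : corner
    refine ⟨i, j, hij, u i, w i, u j, w' j, hwi, hw'j, u, ?_, ?_, ?_, ?_⟩
    · have : (fun k => if k = i then u i else if k = j then u j else u k) = u := by
        funext k; split_ifs with h1 h2 <;> first | (subst h1; rfl) | (subst h2; rfl) | rfl
      rwa [this]
    · have : (fun k => if k = i then u i else if k = j then w' j else u k) = w' := by
        funext k
        split_ifs with h1 h2
        · subst h1; exact hw'out k hij
        · subst h2; rfl
        · exact hw'out k h2
      rw [this]; exact hWU hw'
    · have : (fun k => if k = i then w i else if k = j then u j else u k) = w := by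
        funext k
        split_ifs with h1 h2
        · subst h1; rfl
        · subst h2; exact hwout k (Ne.symm hij)
        · exact hwout k h1
      rw [this]; exact hWU hw
    · have : (fun k => if k = i then w i else if k = j then w' j else u k) = u' := by
        funext k
        split_ifs with h1 h2
        · subst h1
          have hne : k ≠ k1 := hj1 ▸ hij
          exact (hk1out k hne).symm
        · subst h2
          have hne : k ≠ k2 := hi2 ▸ (Ne.symm hij)
          exact (hk2out k hne).symm
        · have hne : k ≠ k1 := hj1 ▸ h2
          exact ((hk1out k hne).trans (hwout k h1).symm).symm
      rw [this]; exact hu'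
  · exact absurd (hi2.trans hj2.symm) hij

/-- if `d ≥ 2`, `q ≥ 2` and the VC-dimension of `(U, n(U))` is at least 3
for `U ⊆ V(H(d,q))`, then either some rectilinear line contains at least four vertices of
`U`, or `U` contains a rectangle. -/
theorem line_or_rectangle_of_vc_dim_ge_three (d q : ℕ) (hd : 2 ≤ d) (hq : 2 ≤ q)
    (U : Finset (Fin d → ZMod q))
    (hvc : ∃ W ⊆ U, 3 ≤ W.card ∧ Shatters 1 U W) :
    (∃ (i : Fin d) (base : Fin d → ZMod q),
      4 ≤ (U.filter fun v => ∀ k, k ≠ i → v k = base k).card) ∨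
    (∃ (i j : Fin d), i ≠ j ∧ ∃ (a b c e : ZMod q), a ≠ b ∧ c ≠ e ∧
      ∃ base : Fin d → ZMod q,
        (fun k => if k = i then a else if k = j then c else base k) ∈ U ∧
        (fun k => if k = i then a else if k = j then e else base k) ∈ U ∧
        (fun k => if k = i then b else if k = j then c else base k) ∈ U ∧
        (fun k => if k = i then b else if k = j then e else base k) ∈ U) := by
  classical
  obtain ⟨W, hWU, hW3, hSh⟩ := hvc
  obtain ⟨w1, w2, w3, hw1, hw2, hw3, h12, h13, h23⟩ :=
    Finset.two_lt_card_iff.mp (by omega : 2 < W.card)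
  obtain ⟨u, hu, huprop⟩ := hSh W (Finset.Subset.refl W)
  have hadj : ∀ w ∈ W, hammingAdj 1 u w := fun w hw => (huprop w hw).mp hw
  obtain ⟨i1, hd1, ho1⟩ := hammingAdj_one_iff.mp (hadj w1 hw1)
  obtain ⟨i2, hd2, ho2⟩ := hammingAdj_one_iff.mp (hadj w2 hw2)
  obtain ⟨i3, hd3, ho3⟩ := hammingAdj_one_iff.mp (hadj w3 hw3)
  by_cases hc12 : i1 = i2
  · by_cases hc13 : i1 = i3
    · -- all differ from u in coordinate i1 : line
      subst hc12; subst hc13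
      left
      refine ⟨i1, u, ?_⟩
      have hne1 : u ≠ w1 := fun h => hd1 (congrFun h i1)
      have hne2 : u ≠ w2 := fun h => hd2 (congrFun h i1)
      have hne3 : u ≠ w3 := fun h => hd3 (congrFun h i1)
      have hsub : ({u, w1, w2, w3} : Finset (Fin d → ZMod q)) ⊆
          U.filter (fun v => ∀ k, k ≠ i1 → v k = u k) := by
        intro x hx
        simp only [Finset.mem_insert, Finset.mem_singleton] at hx
        rcases hx with rfl | rfl | rfl | rfl
        · exact Finset.mem_filter.mpr ⟨hu, fun k _ => rfl⟩
        · exact Finset.mem_filter.mpr ⟨hWU hw1, fun k hk => (ho1 k hk).symm⟩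
        · exact Finset.mem_filter.mpr ⟨hWU hw2, fun k hk => (ho2 k hk).symm⟩
        · exact Finset.mem_filter.mpr ⟨hWU hw3, fun k hk => (ho3 k hk).symm⟩
      have hcard : ({u, w1, w2, w3} : Finset (Fin d → ZMod q)).card = 4 := by
        rw [Finset.card_insert_of_notMem (by simp [hne1, hne2, hne3]),
            Finset.card_insert_of_notMem (by simp [h12, h13]),
            Finset.card_insert_of_notMem (by simp [h23]),
            Finset.card_singleton]
      calc 4 = ({u, w1, w2, w3} : Finset (Fin d → ZMod q)).card := hcard.symm
        _ ≤ _ := Finset.card_le_card hsub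
    · -- i1 ≠ i3 : rectangle with w1, w3, third point w2
      right
      exact rect_case U W hWU hSh u hu w1 w3 w2 hw1 hw3 hw2 (Ne.symm h12) h23
        (hadj w2 hw2) i1 i3 hc13 hd1 ho1 hd3 ho3
  · -- i1 ≠ i2 : rectangle with w1, w2, third point w3
    right
    exact rect_case U W hWU hSh u hu w1 w2 w3 hw1 hw2 hw3 (Ne.symm h13) (Ne.symm h23)
      (hadj w3 hw3) i1 i2 hc12 hd1 ho1 hd2 ho2
end

section
/- Let d ≥ 2 and q ≥ 4 be natural numbers, and let U be a subset of the vertices of the Hamming graph H(d,q,2) with |U| ≥ 2q^(d−1). Then the VC-dimension of (U, n(U)) is at least 2. -/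
lemma adj_two_iff {q : ℕ} (u w : Fin 2 → ZMod q) :
    hammingAdj 2 u w ↔ (u 0 ≠ w 0 ∧ u 1 ≠ w 1) := by
  unfold hammingAdj
  have huniv : (Finset.univ : Finset (Fin 2)) = {0, 1} := by decide
  rw [huniv]
  by_cases h0 : u 0 = w 0 <;> by_cases h1 : u 1 = w 1 <;>
    simp [Finset.filter_insert, Finset.filter_singleton, h0, h1]

lemma ext2 {q : ℕ} (u w : Fin 2 → ZMod q) :
    u = w ↔ (u 0 = w 0 ∧ u 1 = w 1) := by
  constructor
  · rintro rfl; exact ⟨rfl, rfl⟩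
  · rintro ⟨h0, h1⟩; funext i; fin_cases i <;> assumption

/-- generic shattering certificate for a pair -/
lemma SH {q : ℕ} (U : Finset (Fin 2 → ZMod q)) (w1 w2 u00 u10 u01 u11 : Fin 2 → ZMod q)
    (hw1 : w1 ∈ U) (hw2 : w2 ∈ U) (h00 : u00 ∈ U) (h10 : u10 ∈ U) (h01 : u01 ∈ U)
    (h11 : u11 ∈ U) (hne : w1 ≠ w2)
    (a00 : ¬ hammingAdj 2 u00 w1) (b00 : ¬ hammingAdj 2 u00 w2)
    (a10 : hammingAdj 2 u10 w1) (b10 : ¬ hammingAdj 2 u10 w2)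
    (a01 : ¬ hammingAdj 2 u01 w1) (b01 : hammingAdj 2 u01 w2)
    (a11 : hammingAdj 2 u11 w1) (b11 : hammingAdj 2 u11 w2) :
    ∃ W ⊆ U, W.card = 2 ∧ Shatters 2 U W := by
  refine ⟨{w1, w2}, ?_, ?_, ?_⟩
  · intro x hx
    rcases Finset.mem_insert.1 hx with rfl | hx
    · exact hw1
    · rw [Finset.mem_singleton] at hx; subst hx; exact hw2
  · rw [Finset.card_insert_of_notMem (by simpa using hne), Finset.card_singleton]
  · intro S hS
    by_cases h1 : w1 ∈ S <;> by_cases h2 : w2 ∈ S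
    · refine ⟨u11, h11, ?_⟩
      intro w hw
      rcases Finset.mem_insert.1 hw with rfl | hw
      · exact iff_of_true h1 a11
      · rw [Finset.mem_singleton] at hw; subst hw; exact iff_of_true h2 b11
    · refine ⟨u10, h10, ?_⟩
      intro w hw
      rcases Finset.mem_insert.1 hw with rfl | hw
      · exact iff_of_true h1 a10
      · rw [Finset.mem_singleton] at hw; subst hw; exact iff_of_false h2 b10
    · refine ⟨u01, h01, ?_⟩
      intro w hw
      rcases Finset.mem_insert.1 hw with rfl | hw
      · exact iff_of_false h1 a01
      · rw [Finset.mem_singleton] at hw; subst hw; exact iff_of_true h2 b01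
    · refine ⟨u00, h00, ?_⟩
      intro w hw
      rcases Finset.mem_insert.1 hw with rfl | hw
      · exact iff_of_false h1 a00
      · rw [Finset.mem_singleton] at hw; subst hw; exact iff_of_false h2 b00

/-- mechanism: pair in a common "row" (coordinate 1), distinct "columns" (coordinate 0) -/
lemma M1row {q : ℕ} (U : Finset (Fin 2 → ZMod q)) (w1 w2 u1 u2 u12 : Fin 2 → ZMod q)
    (hw1 : w1 ∈ U) (hw2 : w2 ∈ U) (hu1 : u1 ∈ U) (hu2 : u2 ∈ U) (hu12 : u12 ∈ U)
    (hrow : w1 1 = w2 1) (hcol : w1 0 ≠ w2 0)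
    (c1 : u1 0 = w2 0) (c1' : u1 1 ≠ w1 1)
    (c2 : u2 0 = w1 0) (c2' : u2 1 ≠ w1 1)
    (c3 : u12 0 ≠ w1 0) (c3' : u12 0 ≠ w2 0) (c3'' : u12 1 ≠ w1 1) :
    ∃ W ⊆ U, W.card = 2 ∧ Shatters 2 U W := by
  refine SH U w1 w2 w1 u1 u2 u12 hw1 hw2 hw1 hu1 hu2 hu12
    (fun h => hcol (by rw [h]))
    (by rw [adj_two_iff]; exact fun h => h.1 rfl)
    (by rw [adj_two_iff]; exact fun h => h.2 hrow)
    (by rw [adj_two_iff]; exact ⟨fun h => hcol (h.symm.trans c1), c1'⟩)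
    (by rw [adj_two_iff]; exact fun h => h.1 c1)
    (by rw [adj_two_iff]; exact fun h => h.1 c2)
    (by rw [adj_two_iff]; exact ⟨fun h => hcol (c2.symm.trans h), fun h => c2' (h.trans hrow.symm)⟩)
    (by rw [adj_two_iff]; exact ⟨c3, c3''⟩)
    (by rw [adj_two_iff]; exact ⟨c3', fun h => c3'' (h.trans hrow.symm)⟩)

/-- mechanism: pair in a common "column" (coordinate 0), distinct "rows" -/
lemma M1col {q : ℕ} (U : Finset (Fin 2 → ZMod q)) (w1 w2 u1 u2 u12 : Fin 2 → ZMod q)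
    (hw1 : w1 ∈ U) (hw2 : w2 ∈ U) (hu1 : u1 ∈ U) (hu2 : u2 ∈ U) (hu12 : u12 ∈ U)
    (hrow : w1 0 = w2 0) (hcol : w1 1 ≠ w2 1)
    (c1 : u1 1 = w2 1) (c1' : u1 0 ≠ w1 0)
    (c2 : u2 1 = w1 1) (c2' : u2 0 ≠ w1 0)
    (c3 : u12 1 ≠ w1 1) (c3' : u12 1 ≠ w2 1) (c3'' : u12 0 ≠ w1 0) :
    ∃ W ⊆ U, W.card = 2 ∧ Shatters 2 U W := by
  refine SH U w1 w2 w1 u1 u2 u12 hw1 hw2 hw1 hu1 hu2 hu12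
    (fun h => hcol (by rw [h]))
    (by rw [adj_two_iff]; exact fun h => h.1 rfl)
    (by rw [adj_two_iff]; exact fun h => h.1 hrow)
    (by rw [adj_two_iff]; exact ⟨c1', fun h => hcol (h.symm.trans c1)⟩)
    (by rw [adj_two_iff]; exact fun h => h.2 c1)
    (by rw [adj_two_iff]; exact fun h => h.2 c2)
    (by rw [adj_two_iff]; exact ⟨fun h => c2' (h.trans hrow.symm), fun h => hcol (c2.symm.trans h)⟩)
    (by rw [adj_two_iff]; exact ⟨c3'', c3⟩)
    (by rw [adj_two_iff]; exact ⟨fun h => c3'' (h.trans hrow.symm), c3'⟩)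

/-- mechanism: "adjacent" pair w1 w2 with an L-corner point u00 and a generic point u11 -/
lemma M2 {q : ℕ} (U : Finset (Fin 2 → ZMod q)) (w1 w2 u00 u11 : Fin 2 → ZMod q)
    (hw1 : w1 ∈ U) (hw2 : w2 ∈ U) (h00 : u00 ∈ U) (h11 : u11 ∈ U)
    (hcol : w1 0 ≠ w2 0) (hrow : w1 1 ≠ w2 1)
    (c0 : u00 0 = w1 0) (c0' : u00 1 = w2 1)
    (c1 : u11 0 ≠ w1 0) (c1' : u11 0 ≠ w2 0) (c2 : u11 1 ≠ w1 1) (c2' : u11 1 ≠ w2 1) :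
    ∃ W ⊆ U, W.card = 2 ∧ Shatters 2 U W := by
  refine SH U w1 w2 u00 w2 w1 u11 hw1 hw2 h00 hw2 hw1 h11
    (fun h => hcol (by rw [h]))
    (by rw [adj_two_iff]; exact fun h => h.1 c0)
    (by rw [adj_two_iff]; exact fun h => h.2 c0')
    (by rw [adj_two_iff]; exact ⟨fun h => hcol h.symm, fun h => hrow h.symm⟩)
    (by rw [adj_two_iff]; exact fun h => h.1 rfl)
    (by rw [adj_two_iff]; exact fun h => h.1 rfl)
    (by rw [adj_two_iff]; exact ⟨hcol, hrow⟩)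
    (by rw [adj_two_iff]; exact ⟨c1, c2⟩)
    (by rw [adj_two_iff]; exact ⟨c1', c2'⟩)
lemma core2 {q : ℕ} (hq : 4 ≤ q) (U : Finset (Fin 2 → ZMod q)) (hU : 2 * q ≤ U.card) :
    ∃ W ⊆ U, W.card = 2 ∧ Shatters 2 U W := by
  haveI : NeZero q := ⟨by omega⟩
  by_contra hbad
  have hq2 : q - 2 + 2 = q := Nat.sub_add_cancel (le_trans (by norm_num) hq)
  have herase2 : ∀ x y : ZMod q, x ≠ y → ((Finset.univ.erase x).erase y).card = q - 2 := by
    intro x y hxy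
    rw [Finset.card_erase_of_mem (Finset.mem_erase.2 ⟨hxy.symm, Finset.mem_univ _⟩),
      Finset.card_erase_of_mem (Finset.mem_univ _), Finset.card_univ, ZMod.card]
    omega
  have hbound : ∀ (T : Finset (Fin 2 → ZMod q)) (i : Fin 2) (x y : ZMod q), x ≠ y →
      (∀ p ∈ T, p i ≠ x ∧ p i ≠ y) →
      (∀ p ∈ T, ∀ p' ∈ T, p i = p' i → p = p') → T.card ≤ q - 2 := by
    intro T i x y hxy hmem hinj
    calc T.card ≤ ((Finset.univ.erase x).erase y).card := by
          apply Finset.card_le_card_of_injOn (fun p => p i)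
          · intro p hp
            exact Finset.mem_erase.2 ⟨(hmem p hp).2,
              Finset.mem_erase.2 ⟨(hmem p hp).1, Finset.mem_univ _⟩⟩
          · intro p hp p' hp' h
            exact hinj p hp p' hp' h
      _ = q - 2 := herase2 x y hxy
  by_cases hcorner : ∃ p1 ∈ U, ∃ p2 ∈ U, ∃ p3 ∈ U,
      p1 0 = p2 0 ∧ p2 1 = p3 1 ∧ p1 1 ≠ p2 1 ∧ p2 0 ≠ p3 0
  · -- CASE II: there is a corner
    obtain ⟨p1, hp1, p2, hp2, p3, hp3, e12, e23, n12, n23⟩ := hcorner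
    have hab : p1 0 ≠ p3 0 := fun h => n23 (e12.symm.trans h)
    have h13 : p1 1 ≠ p3 1 := fun h => n12 (h.trans e23.symm)
    have hconf : ∀ p ∈ U, p 0 = p1 0 ∨ p 0 = p3 0 ∨ p 1 = p1 1 ∨ p 1 = p2 1 := by
      intro p hp
      by_contra hc
      push_neg at hc
      obtain ⟨ha, hb, hr, hs⟩ := hc
      exact hbad (M2 U p1 p3 p2 p hp1 hp3 hp2 hp hab
        (fun h => n12 (h.trans e23.symm)) e12.symm e23 ha hb hr
        (fun h => hs (h.trans e23.symm)))
    have hsub : U ⊆ (U.filter (fun p => p 0 = p1 0 ∧ p 1 ≠ p1 1 ∧ p 1 ≠ p2 1)) ∪ (U.filter (fun p => p 0 = p3 0 ∧ p 1 ≠ p1 1 ∧ p 1 ≠ p2 1)) ∪ (U.filter (fun p => p 1 = p1 1 ∧ p 0 ≠ p1 0 ∧ p 0 ≠ p3 0)) ∪ (U.filter (fun p => p 1 = p2 1 ∧ p 0 ≠ p1 0 ∧ p 0 ≠ p3 0)) ∪ (U.filter (fun p => (p 0 = p1 0 ∨ p 0 = p3 0) ∧ (p 1 = p1 1 ∨ p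 1 = p2 1))) := by
      intro p hp
      simp only [Finset.mem_union, Finset.mem_filter]
      by_cases h1r : p 1 = p1 1
      · by_cases h0a : p 0 = p1 0
        · exact Or.inr ⟨hp, Or.inl h0a, Or.inl h1r⟩
        · by_cases h0b : p 0 = p3 0
          · exact Or.inr ⟨hp, Or.inr h0b, Or.inl h1r⟩
          · exact Or.inl (Or.inl (Or.inr ⟨hp, h1r, h0a, h0b⟩))
      · by_cases h1s : p 1 = p2 1
        · by_cases h0a : p 0 = p1 0
          · exact Or.inr ⟨hp, Or.inl h0a, Or.inr h1s⟩
          · by_cases h0b : p 0 = p3 0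
            · exact Or.inr ⟨hp, Or.inr h0b, Or.inr h1s⟩
            · exact Or.inl (Or.inr ⟨hp, h1s, h0a, h0b⟩)
        · by_cases h0a : p 0 = p1 0
          · exact Or.inl (Or.inl (Or.inl (Or.inl ⟨hp, h0a, h1r, h1s⟩)))
          · by_cases h0b : p 0 = p3 0
            · exact Or.inl (Or.inl (Or.inl (Or.inr ⟨hp, h0b, h1r, h1s⟩)))
            · exact absurd (hconf p hp) (by tauto)
    have hcard : U.card ≤ (U.filter (fun p => p 0 = p1 0 ∧ p 1 ≠ p1 1 ∧ p 1 ≠ p2 1)).card + (U.filter (fun p => p 0 = p3 0 ∧ p 1 ≠ p1 1 ∧ p 1 ≠ p2 1)).card + (U.filter (fun p => p 1 = p1 1 ∧ p 0 ≠ p1 0 ∧ p 0 ≠ p3 0)).card + (U.filter (fun p => p 1 = p2 1 ∧ p 0 ≠ p1 0 ∧ p 0 ≠ p3 0)).card + (U.filter (fun p => (p 0 = p1 0 ∨ p 0 = p3 0) ∧ (p 1 = p1 1 ∨ p 1 = p2 1))).card := by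
      have h1 := Finset.card_le_card hsub
      have h2 := Finset.card_union_le ((U.filter (fun p => p 0 = p1 0 ∧ p 1 ≠ p1 1 ∧ p 1 ≠ p2 1)) ∪ (U.filter (fun p => p 0 = p3 0 ∧ p 1 ≠ p1 1 ∧ p 1 ≠ p2 1)) ∪ (U.filter (fun p => p 1 = p1 1 ∧ p 0 ≠ p1 0 ∧ p 0 ≠ p3 0)) ∪ (U.filter (fun p => p 1 = p2 1 ∧ p 0 ≠ p1 0 ∧ p 0 ≠ p3 0))) (U.filter (fun p => (p 0 = p1 0 ∨ p 0 = p3 0) ∧ (p 1 = p1 1 ∨ p 1 = p2 1)))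
      have h3 := Finset.card_union_le ((U.filter (fun p => p 0 = p1 0 ∧ p 1 ≠ p1 1 ∧ p 1 ≠ p2 1)) ∪ (U.filter (fun p => p 0 = p3 0 ∧ p 1 ≠ p1 1 ∧ p 1 ≠ p2 1)) ∪ (U.filter (fun p => p 1 = p1 1 ∧ p 0 ≠ p1 0 ∧ p 0 ≠ p3 0))) (U.filter (fun p => p 1 = p2 1 ∧ p 0 ≠ p1 0 ∧ p 0 ≠ p3 0))
      have h4 := Finset.card_union_le ((U.filter (fun p => p 0 = p1 0 ∧ p 1 ≠ p1 1 ∧ p 1 ≠ p2 1)) ∪ (U.filter (fun p => p 0 = p3 0 ∧ p 1 ≠ p1 1 ∧ p 1 ≠ p2 1))) (U.filter (fun p => p 1 = p1 1 ∧ p 0 ≠ p1 0 ∧ p 0 ≠ p3 0))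
      have h5 := Finset.card_union_le (U.filter (fun p => p 0 = p1 0 ∧ p 1 ≠ p1 1 ∧ p 1 ≠ p2 1)) (U.filter (fun p => p 0 = p3 0 ∧ p 1 ≠ p1 1 ∧ p 1 ≠ p2 1))
      linarith
    have hA : (U.filter (fun p => p 0 = p1 0 ∧ p 1 ≠ p1 1 ∧ p 1 ≠ p2 1)).card ≤ q - 2 := by
      apply hbound (U.filter (fun p => p 0 = p1 0 ∧ p 1 ≠ p1 1 ∧ p 1 ≠ p2 1)) 1 (p1 1) (p2 1) n12
      · intro p hp
        exact (Finset.mem_filter.1 hp).2.2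
      · intro p hp p' hp' h
        have ha1 := (Finset.mem_filter.1 hp).2.1
        have ha2 := (Finset.mem_filter.1 hp').2.1
        exact (ext2 p p').2 ⟨ha1.trans ha2.symm, h⟩
    have hB : (U.filter (fun p => p 0 = p3 0 ∧ p 1 ≠ p1 1 ∧ p 1 ≠ p2 1)).card ≤ q - 2 := by
      apply hbound (U.filter (fun p => p 0 = p3 0 ∧ p 1 ≠ p1 1 ∧ p 1 ≠ p2 1)) 1 (p1 1) (p2 1) n12
      · intro p hp
        exact (Finset.mem_filter.1 hp).2.2
      · intro p hp p' hp' h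
        have ha1 := (Finset.mem_filter.1 hp).2.1
        have ha2 := (Finset.mem_filter.1 hp').2.1
        exact (ext2 p p').2 ⟨ha1.trans ha2.symm, h⟩
    have hS : (U.filter (fun p => p 1 = p2 1 ∧ p 0 ≠ p1 0 ∧ p 0 ≠ p3 0)).card ≤ q - 2 := by
      apply hbound (U.filter (fun p => p 1 = p2 1 ∧ p 0 ≠ p1 0 ∧ p 0 ≠ p3 0)) 0 (p1 0) (p3 0) hab
      · intro p hp
        exact (Finset.mem_filter.1 hp).2.2
      · intro p hp p' hp' h
        have ha1 := (Finset.mem_filter.1 hp).2.1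
        have ha2 := (Finset.mem_filter.1 hp').2.1
        exact (ext2 p p').2 ⟨h, ha1.trans ha2.symm⟩
    have hC4 : (U.filter (fun p => (p 0 = p1 0 ∨ p 0 = p3 0) ∧ (p 1 = p1 1 ∨ p 1 = p2 1))).card ≤ 4 := by
      calc (U.filter (fun p => (p 0 = p1 0 ∨ p 0 = p3 0) ∧ (p 1 = p1 1 ∨ p 1 = p2 1))).card ≤ (({p1 0, p3 0} ×ˢ {p1 1, p2 1} : Finset (ZMod q × ZMod q))).card := by
            apply Finset.card_le_card_of_injOn (fun p => (p 0, p 1))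
            · intro p hp
              have h := (Finset.mem_filter.1 hp).2
              refine Finset.mem_product.2 ⟨?_, ?_⟩ <;>
                simp only [Finset.mem_insert, Finset.mem_singleton] <;> tauto
            · intro p hp p' hp' h
              rw [Prod.mk.injEq] at h
              exact (ext2 p p').2 h
        _ ≤ 4 := by
            rw [Finset.card_product]
            have c1 : ({p1 0, p3 0} : Finset (ZMod q)).card ≤ 2 :=
              le_trans (Finset.card_insert_le _ _) (by rw [Finset.card_singleton])
            have c2 : ({p1 1, p2 1} : Finset (ZMod q)).card ≤ 2 :=
              le_trans (Finset.card_insert_le _ _) (by rw [Finset.card_singleton])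
            calc ({p1 0, p3 0} : Finset (ZMod q)).card * ({p1 1, p2 1} : Finset (ZMod q)).card
                ≤ 2 * 2 := Nat.mul_le_mul c1 c2
              _ = 4 := rfl
    have hC3 : (¬ ∃ p4 ∈ U, p4 0 = p3 0 ∧ p4 1 = p1 1) → (U.filter (fun p => (p 0 = p1 0 ∨ p 0 = p3 0) ∧ (p 1 = p1 1 ∨ p 1 = p2 1))).card ≤ 3 := by
      intro hnbr
      calc (U.filter (fun p => (p 0 = p1 0 ∨ p 0 = p3 0) ∧ (p 1 = p1 1 ∨ p 1 = p2 1))).card ≤ (({(p1 0, p1 1), (p1 0, p2 1), (p3 0, p2 1)} :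
              Finset (ZMod q × ZMod q))).card := by
            apply Finset.card_le_card_of_injOn (fun p => (p 0, p 1))
            · intro p hp
              have hpU := (Finset.mem_filter.1 hp).1
              have h := (Finset.mem_filter.1 hp).2
              have hn : ¬ (p 0 = p3 0 ∧ p 1 = p1 1) := fun hcon => hnbr ⟨p, hpU, hcon⟩
              simp only [Finset.mem_coe, Finset.mem_insert, Finset.mem_singleton, Prod.mk.injEq]
              tauto
            · intro p hp p' hp' h
              rw [Prod.mk.injEq] at h
              exact (ext2 p p').2 h
        _ ≤ 3 := by
            have t1 := Finset.card_insert_le ((p1 0, p1 1))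
              ({(p1 0, p2 1), (p3 0, p2 1)} : Finset (ZMod q × ZMod q))
            have t2 := Finset.card_insert_le ((p1 0, p2 1))
              ({(p3 0, p2 1)} : Finset (ZMod q × ZMod q))
            have t3 : ({(p3 0, p2 1)} : Finset (ZMod q × ZMod q)).card = 1 :=
              Finset.card_singleton _
            linarith
    -- dichotomy facts
    have hP1 : (U.filter (fun p => p 1 = p1 1 ∧ p 0 ≠ p1 0 ∧ p 0 ≠ p3 0)).Nonempty → ((U.filter (fun p => p 0 = p3 0 ∧ p 1 ≠ p1 1 ∧ p 1 ≠ p2 1)).Nonempty ∨ (∃ p4 ∈ U, p4 0 = p3 0 ∧ p4 1 = p1 1)) →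
        False := by
      rintro ⟨u12, hu12⟩ h
      have hu12U := (Finset.mem_filter.1 hu12).1
      have hu12p := (Finset.mem_filter.1 hu12).2
      obtain ⟨u1, hu1U, c1, c1'⟩ :
          ∃ u1 ∈ U, u1 0 = p3 0 ∧ u1 1 ≠ p2 1 := by
        rcases h with ⟨pb, hpb⟩ | ⟨p4, hp4U, hc, hr⟩
        · exact ⟨pb, (Finset.mem_filter.1 hpb).1, (Finset.mem_filter.1 hpb).2.1,
            (Finset.mem_filter.1 hpb).2.2.2⟩
        · exact ⟨p4, hp4U, hc, fun h' => n12 (hr.symm.trans h')⟩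
      exact hbad (M1row U p2 p3 u1 p1 u12 hp2 hp3 hu1U hp1 hu12U e23 n23 c1 c1'
        e12 n12
        (fun h' => hu12p.2.1 (h'.trans e12.symm)) hu12p.2.2
        (fun h' => n12 (hu12p.1.symm.trans h')))
    have hP2 : (U.filter (fun p => p 0 = p3 0 ∧ p 1 ≠ p1 1 ∧ p 1 ≠ p2 1)).Nonempty → ((U.filter (fun p => p 1 = p1 1 ∧ p 0 ≠ p1 0 ∧ p 0 ≠ p3 0)).Nonempty ∨ (∃ p4 ∈ U, p4 0 = p3 0 ∧ p4 1 = p1 1)) →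
        False := by
      rintro ⟨u12, hu12⟩ h
      have hu12U := (Finset.mem_filter.1 hu12).1
      have hu12p := (Finset.mem_filter.1 hu12).2
      obtain ⟨u2, hu2U, c2, c2'⟩ :
          ∃ u2 ∈ U, u2 1 = p1 1 ∧ u2 0 ≠ p1 0 := by
        rcases h with ⟨pr, hpr⟩ | ⟨p4, hp4U, hc, hr⟩
        · exact ⟨pr, (Finset.mem_filter.1 hpr).1, (Finset.mem_filter.1 hpr).2.1,
            (Finset.mem_filter.1 hpr).2.2.1⟩
        · exact ⟨p4, hp4U, hr, fun h' => hab (h'.symm.trans hc)⟩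
      exact hbad (M1col U p1 p2 p3 u2 u12 hp1 hp2 hp3 hu2U hu12U e12 n12
        e23.symm hab.symm c2 c2'
        hu12p.2.1 hu12p.2.2 (fun h' => hab (h'.symm.trans hu12p.1)))
    -- case split
    by_cases hR : (U.filter (fun p => p 1 = p1 1 ∧ p 0 ≠ p1 0 ∧ p 0 ≠ p3 0)).Nonempty
    · -- II.A
      have hBe : (U.filter (fun p => p 0 = p3 0 ∧ p 1 ≠ p1 1 ∧ p 1 ≠ p2 1)).card = 0 := by
        rcases Finset.eq_empty_or_nonempty (U.filter (fun p => p 0 = p3 0 ∧ p 1 ≠ p1 1 ∧ p 1 ≠ p2 1)) with he | hne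
        · rw [he]; rfl
        · exact absurd (hP1 hR (Or.inl hne)) (fun h => h)
      have hnbr : ¬ ∃ p4 ∈ U, p4 0 = p3 0 ∧ p4 1 = p1 1 :=
        fun h => hP1 hR (Or.inr h)
      -- disjoint column values of (U.filter (fun p => p 1 = p1 1 ∧ p 0 ≠ p1 0 ∧ p 0 ≠ p3 0)) and (U.filter (fun p => p 1 = p2 1 ∧ p 0 ≠ p1 0 ∧ p 0 ≠ p3 0))
      have hRS : ∀ pR ∈ (U.filter (fun p => p 1 = p1 1 ∧ p 0 ≠ p1 0 ∧ p 0 ≠ p3 0)), ∀ pS ∈ (U.filter (fun p => p 1 = p2 1 ∧ p 0 ≠ p1 0 ∧ p 0 ≠ p3 0)), pR 0 ≠ pS 0 := by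
        intro pR hpR pS hpS hc
        have hRU := (Finset.mem_filter.1 hpR).1
        have hRp := (Finset.mem_filter.1 hpR).2
        have hSU := (Finset.mem_filter.1 hpS).1
        have hSp := (Finset.mem_filter.1 hpS).2
        exact hbad (M1row U p1 pR pS p2 p3 hp1 hRU hSU hp2 hp3 hRp.1.symm
          (fun h' => hRp.2.1 h'.symm) hc.symm
          (fun h' => n12 (hSp.1.symm.trans h').symm)
          e12.symm n12.symm hab.symm (fun h' => hRp.2.2 h'.symm) h13.symm)
      have hdisjRS : Disjoint (U.filter (fun p => p 1 = p1 1 ∧ p 0 ≠ p1 0 ∧ p 0 ≠ p3 0)) (U.filter (fun p => p 1 = p2 1 ∧ p 0 ≠ p1 0 ∧ p 0 ≠ p3 0)) := by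
        rw [Finset.disjoint_left]
        intro p hp hp'
        exact n12 ((Finset.mem_filter.1 hp).2.1.symm.trans (Finset.mem_filter.1 hp').2.1)
      have hRScard : (U.filter (fun p => p 1 = p1 1 ∧ p 0 ≠ p1 0 ∧ p 0 ≠ p3 0)).card + (U.filter (fun p => p 1 = p2 1 ∧ p 0 ≠ p1 0 ∧ p 0 ≠ p3 0)).card ≤ q - 2 := by
        rw [← Finset.card_union_of_disjoint hdisjRS]
        apply hbound ((U.filter (fun p => p 1 = p1 1 ∧ p 0 ≠ p1 0 ∧ p 0 ≠ p3 0)) ∪ (U.filter (fun p => p 1 = p2 1 ∧ p 0 ≠ p1 0 ∧ p 0 ≠ p3 0))) 0 (p1 0) (p3 0) hab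
        · intro p hp
          rcases Finset.mem_union.1 hp with h | h
          · exact (Finset.mem_filter.1 h).2.2
          · exact (Finset.mem_filter.1 h).2.2
        · intro p hp p' hp' h
          rcases Finset.mem_union.1 hp with h1 | h1 <;> rcases Finset.mem_union.1 hp' with h2 | h2
          · exact (ext2 p p').2 ⟨h, (Finset.mem_filter.1 h1).2.1.trans
              (Finset.mem_filter.1 h2).2.1.symm⟩
          · exact absurd h (hRS p h1 p' h2)
          · exact absurd h.symm (hRS p' h2 p h1)
          · exact (ext2 p p').2 ⟨h, (Finset.mem_filter.1 h1).2.1.trans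
              (Finset.mem_filter.1 h2).2.1.symm⟩
      have := hC3 hnbr
      linarith
    · by_cases hB' : (U.filter (fun p => p 0 = p3 0 ∧ p 1 ≠ p1 1 ∧ p 1 ≠ p2 1)).Nonempty
      · -- II.B
        have hRe : (U.filter (fun p => p 1 = p1 1 ∧ p 0 ≠ p1 0 ∧ p 0 ≠ p3 0)).card = 0 := by
          rw [Finset.card_eq_zero, ← Finset.not_nonempty_iff_eq_empty]
          exact hR
        have hnbr : ¬ ∃ p4 ∈ U, p4 0 = p3 0 ∧ p4 1 = p1 1 :=
          fun h => hP2 hB' (Or.inr h)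
        by_cases hS' : (U.filter (fun p => p 1 = p2 1 ∧ p 0 ≠ p1 0 ∧ p 0 ≠ p3 0)).Nonempty
        · obtain ⟨pS, hpS⟩ := hS'
          have hSU := (Finset.mem_filter.1 hpS).1
          have hSp := (Finset.mem_filter.1 hpS).2
          have hABr : ∀ pA ∈ (U.filter (fun p => p 0 = p1 0 ∧ p 1 ≠ p1 1 ∧ p 1 ≠ p2 1)), ∀ pB ∈ (U.filter (fun p => p 0 = p3 0 ∧ p 1 ≠ p1 1 ∧ p 1 ≠ p2 1)), pA 1 ≠ pB 1 := by
            intro pA hpA pB hpB hc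
            have hAU := (Finset.mem_filter.1 hpA).1
            have hAp := (Finset.mem_filter.1 hpA).2
            have hBU := (Finset.mem_filter.1 hpB).1
            have hBp := (Finset.mem_filter.1 hpB).2
            exact hbad (M1row U pA pB p3 p2 pS hAU hBU hp3 hp2 hSU hc
              (fun h' => hab (hAp.1.symm.trans (h'.trans hBp.1)))
              hBp.1.symm (fun h' => hAp.2.2 (h'.symm.trans e23.symm))
              (e12.symm.trans hAp.1.symm) (fun h' => hAp.2.2 h'.symm)
              (fun h' => hSp.2.1 (h'.trans hAp.1))
              (fun h' => hSp.2.2 (h'.trans hBp.1))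
              (fun h' => hAp.2.2 (hSp.1.symm.trans h').symm))
          have hdisjAB : Disjoint (U.filter (fun p => p 0 = p1 0 ∧ p 1 ≠ p1 1 ∧ p 1 ≠ p2 1)) (U.filter (fun p => p 0 = p3 0 ∧ p 1 ≠ p1 1 ∧ p 1 ≠ p2 1)) := by
            rw [Finset.disjoint_left]
            intro p hp hp'
            exact hab ((Finset.mem_filter.1 hp).2.1.symm.trans (Finset.mem_filter.1 hp').2.1)
          have hABcard : (U.filter (fun p => p 0 = p1 0 ∧ p 1 ≠ p1 1 ∧ p 1 ≠ p2 1)).card + (U.filter (fun p => p 0 = p3 0 ∧ p 1 ≠ p1 1 ∧ p 1 ≠ p2 1)).card ≤ q - 2 := by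
            rw [← Finset.card_union_of_disjoint hdisjAB]
            apply hbound ((U.filter (fun p => p 0 = p1 0 ∧ p 1 ≠ p1 1 ∧ p 1 ≠ p2 1)) ∪ (U.filter (fun p => p 0 = p3 0 ∧ p 1 ≠ p1 1 ∧ p 1 ≠ p2 1))) 1 (p1 1) (p2 1) n12
            · intro p hp
              rcases Finset.mem_union.1 hp with h | h
              · exact (Finset.mem_filter.1 h).2.2
              · exact (Finset.mem_filter.1 h).2.2
            · intro p hp p' hp' h
              rcases Finset.mem_union.1 hp with h1 | h1 <;>
                rcases Finset.mem_union.1 hp' with h2 | h2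
              · exact (ext2 p p').2 ⟨(Finset.mem_filter.1 h1).2.1.trans
                  (Finset.mem_filter.1 h2).2.1.symm, h⟩
              · exact absurd h (hABr p h1 p' h2)
              · exact absurd h.symm (hABr p' h2 p h1)
              · exact (ext2 p p').2 ⟨(Finset.mem_filter.1 h1).2.1.trans
                  (Finset.mem_filter.1 h2).2.1.symm, h⟩
          have := hC3 hnbr
          linarith
        · have hSe : (U.filter (fun p => p 1 = p2 1 ∧ p 0 ≠ p1 0 ∧ p 0 ≠ p3 0)).card = 0 := by
            rw [Finset.card_eq_zero, ← Finset.not_nonempty_iff_eq_empty]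
            exact hS'
          have := hC3 hnbr
          linarith
      · -- II.C
        have hRe : (U.filter (fun p => p 1 = p1 1 ∧ p 0 ≠ p1 0 ∧ p 0 ≠ p3 0)).card = 0 := by
          rw [Finset.card_eq_zero, ← Finset.not_nonempty_iff_eq_empty]; exact hR
        have hBe : (U.filter (fun p => p 0 = p3 0 ∧ p 1 ≠ p1 1 ∧ p 1 ≠ p2 1)).card = 0 := by
          rw [Finset.card_eq_zero, ← Finset.not_nonempty_iff_eq_empty]; exact hB'
        by_cases hbr : ∃ p4 ∈ U, p4 0 = p3 0 ∧ p4 1 = p1 1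
        · obtain ⟨p4, hp4U, hc4, hr4⟩ := hbr
          by_cases hA' : (U.filter (fun p => p 0 = p1 0 ∧ p 1 ≠ p1 1 ∧ p 1 ≠ p2 1)).Nonempty
          · obtain ⟨pA, hpA⟩ := hA'
            have hAU := (Finset.mem_filter.1 hpA).1
            have hAp := (Finset.mem_filter.1 hpA).2
            exact hbad (M1col U p4 p3 p2 p1 pA hp4U hp3 hp2 hp1 hAU
              (hc4)
              (fun h' => h13 (hr4.symm.trans h'))
              e23 (fun h' => hab (e12.trans (h'.trans hc4)))
              hr4.symm (fun h' => hab (h'.trans hc4))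
              (fun h' => hAp.2.1 (h'.trans hr4))
              (fun h' => hAp.2.2 (h'.trans e23.symm))
              (fun h' => hab (hAp.1.symm.trans (h'.trans hc4))))
          · have hAe : (U.filter (fun p => p 0 = p1 0 ∧ p 1 ≠ p1 1 ∧ p 1 ≠ p2 1)).card = 0 := by
              rw [Finset.card_eq_zero, ← Finset.not_nonempty_iff_eq_empty]; exact hA'
            have hSc : (U.filter (fun p => p 1 = p2 1 ∧ p 0 ≠ p1 0 ∧ p 0 ≠ p3 0)).card ≤ q - 2 := hS
            linarith
        · have := hC3 hbr
          linarith
  · -- CASE I: no corner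
    have hnc : ∀ pa ∈ U, ∀ pb ∈ U, ∀ pc ∈ U,
        pa 0 = pb 0 → pb 1 = pc 1 → pa 1 ≠ pb 1 → pb 0 ≠ pc 0 → False := by
      intro pa ha pb hb pc hc h1 h2 h3 h4
      exact hcorner ⟨pa, ha, pb, hb, pc, hc, h1, h2, h3, h4⟩
    have hP1inj : ∀ p ∈ (U.filter (fun p => ∀ p' ∈ U, p' 0 = p 0 → p' = p)), ∀ p' ∈ (U.filter (fun p => ∀ p' ∈ U, p' 0 = p 0 → p' = p)), p 0 = p' 0 → p = p' := by
      intro p hp p' hp' h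
      exact ((Finset.mem_filter.1 hp').2 p (Finset.mem_filter.1 hp).1 h)
    have hsub : U ⊆ (U.filter (fun p => ∀ p' ∈ U, p' 0 = p 0 → p' = p)) ∪ (U.filter (fun p => ∀ p' ∈ U, p' 1 = p 1 → p' = p)) := by
      intro p hp
      simp only [Finset.mem_union, Finset.mem_filter]
      by_cases h : ∀ p' ∈ U, p' 0 = p 0 → p' = p
      · exact Or.inl ⟨hp, h⟩
      · push_neg at h
        obtain ⟨p', hp', hcol, hne⟩ := h
        refine Or.inr ⟨hp, fun w hw hwrow => ?_⟩
        by_contra hwp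
        have h1 : p' 1 ≠ p 1 := fun h1 => hne ((ext2 p' p).2 ⟨hcol, h1⟩)
        have h2 : p 0 ≠ w 0 := fun h2 => hwp ((ext2 w p).2 ⟨h2.symm, hwrow⟩)
        exact hnc p' hp' p hp w hw hcol hwrow.symm h1 h2
    have hP1card : (U.filter (fun p => ∀ p' ∈ U, p' 0 = p 0 → p' = p)).card ≤ q := by
      calc (U.filter (fun p => ∀ p' ∈ U, p' 0 = p 0 → p' = p)).card ≤ (Finset.univ : Finset (ZMod q)).card :=
            Finset.card_le_card_of_injOn (fun p => p 0) (fun p _ => Finset.mem_univ _)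
              (fun p hp p' hp' h => hP1inj p hp p' hp' h)
        _ = q := by rw [Finset.card_univ, ZMod.card]
    have hP2card : (U.filter (fun p => ∀ p' ∈ U, p' 1 = p 1 → p' = p)).card ≤ q := by
      calc (U.filter (fun p => ∀ p' ∈ U, p' 1 = p 1 → p' = p)).card ≤ (Finset.univ : Finset (ZMod q)).card :=
            Finset.card_le_card_of_injOn (fun p => p 1) (fun p _ => Finset.mem_univ _)
              (fun p hp p' hp' h =>
                ((Finset.mem_filter.1 hp').2 p (Finset.mem_filter.1 hp).1 h))
        _ = q := by rw [Finset.card_univ, ZMod.card]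
    by_cases hq1 : (U.filter (fun p => ∀ p' ∈ U, p' 0 = p 0 → p' = p)).card = q
    · have himg : (U.filter (fun p => ∀ p' ∈ U, p' 0 = p 0 → p' = p)).image (fun p => p 0) = Finset.univ := by
        apply Finset.eq_univ_of_card
        rw [Finset.card_image_of_injOn (fun p hp p' hp' h => hP1inj p hp p' hp' h), hq1,
          ZMod.card]
      have hUP1 : U ⊆ (U.filter (fun p => ∀ p' ∈ U, p' 0 = p 0 → p' = p)) := by
        intro p hp
        have hm : p 0 ∈ (U.filter (fun p => ∀ p' ∈ U, p' 0 = p 0 → p' = p)).image (fun p => p 0) := by rw [himg]; exact Finset.mem_univ _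
        obtain ⟨p', hp', hcol⟩ := Finset.mem_image.1 hm
        have heq := (Finset.mem_filter.1 hp').2 p hp hcol.symm
        exact heq ▸ hp'
      have := Finset.card_le_card hUP1
      linarith
    · have h1 := Finset.card_le_card hsub
      have h2 := Finset.card_union_le (U.filter (fun p => ∀ p' ∈ U, p' 0 = p 0 → p' = p)) (U.filter (fun p => ∀ p' ∈ U, p' 1 = p 1 → p' = p))
      have h3 : (U.filter (fun p => ∀ p' ∈ U, p' 0 = p 0 → p' = p)).card < q := lt_of_le_of_ne hP1card hq1
      linarith
lemma snoc_adj {d q : ℕ} (c : ZMod q) (u w : Fin d → ZMod q) :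
    hammingAdj 2 (Fin.snoc u c) (Fin.snoc w c) ↔ hammingAdj 2 u w := by
  unfold hammingAdj
  have himg : (Finset.univ.filter fun i : Fin (d+1) =>
        (Fin.snoc u c : Fin (d+1) → ZMod q) i ≠ (Fin.snoc w c : Fin (d+1) → ZMod q) i)
      = (Finset.univ.filter fun i : Fin d => u i ≠ w i).image Fin.castSucc := by
    ext i
    simp only [Finset.mem_filter, Finset.mem_image, Finset.mem_univ, true_and]
    refine Fin.lastCases ?_ ?_ i
    · rw [Fin.snoc_last, Fin.snoc_last]
      constructor
      · intro h; exact absurd rfl h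
      · rintro ⟨j, hj, hj'⟩; exact absurd hj' (Fin.castSucc_lt_last j).ne
    · intro j
      rw [Fin.snoc_castSucc, Fin.snoc_castSucc]
      constructor
      · intro h; exact ⟨j, h, rfl⟩
      · rintro ⟨j', hj, hj'⟩
        rwa [← (Fin.castSucc_injective d) hj']
  rw [himg, Finset.card_image_of_injective _ (Fin.castSucc_injective d)]

lemma step {q d : ℕ} (hq : 4 ≤ q) (hd : 1 ≤ d)
    (IH : ∀ U : Finset (Fin d → ZMod q), 2 * q ^ (d-1) ≤ U.card →
      ∃ W ⊆ U, W.card = 2 ∧ Shatters 2 U W)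
    (U : Finset (Fin (d+1) → ZMod q)) (hU : 2 * q ^ d ≤ U.card) :
    ∃ W ⊆ U, W.card = 2 ∧ Shatters 2 U W := by
  haveI : NeZero q := ⟨by omega⟩
  have hpow : q * (2 * q ^ (d-1)) = 2 * q ^ d := by
    have h1 : d - 1 + 1 = d := by omega
    calc q * (2 * q ^ (d-1)) = 2 * (q ^ (d-1) * q) := by ring
      _ = 2 * q ^ (d-1+1) := by rw [pow_succ]
      _ = 2 * q ^ d := by rw [h1]
  obtain ⟨c, hc⟩ : ∃ c : ZMod q,
      2 * q ^ (d-1) ≤ (U.filter fun x => x (Fin.last d) = c).card := by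
    by_contra h
    push_neg at h
    have hsum : U.card = ∑ c : ZMod q, (U.filter fun x => x (Fin.last d) = c).card :=
      Finset.card_eq_sum_card_fiberwise (fun x _ => Finset.mem_univ (x (Fin.last d)))
    have hB : 0 < 2 * q ^ (d-1) := by positivity
    have hle : ∑ c : ZMod q, (U.filter fun x => x (Fin.last d) = c).card
        ≤ ∑ _c : ZMod q, (2 * q ^ (d-1) - 1) :=
      Finset.sum_le_sum (fun c _ => Nat.le_sub_one_of_lt (h c))
    have hlt : U.card < 2 * q ^ d := by
      calc U.card = ∑ c : ZMod q, (U.filter fun x => x (Fin.last d) = c).card := hsum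
        _ ≤ ∑ _c : ZMod q, (2 * q ^ (d-1) - 1) := hle
        _ = q * (2 * q ^ (d-1) - 1) := by
            rw [Finset.sum_const, Finset.card_univ, ZMod.card, smul_eq_mul]
        _ < q * (2 * q ^ (d-1)) :=
            Nat.mul_lt_mul_of_pos_left (Nat.sub_lt hB one_pos)
              (lt_of_lt_of_le (by norm_num) hq)
        _ = 2 * q ^ d := hpow
    exact absurd hU (not_le.2 hlt)
  have hrinj : ∀ x ∈ (U.filter fun x => x (Fin.last d) = c),
      ∀ y ∈ (U.filter fun x => x (Fin.last d) = c),
      (x ∘ Fin.castSucc : Fin d → ZMod q) = y ∘ Fin.castSucc → x = y := by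
    intro x hx y hy hxy
    funext i
    refine Fin.lastCases ?_ ?_ i
    · rw [(Finset.mem_filter.1 hx).2, (Finset.mem_filter.1 hy).2]
    · intro j; exact congrFun hxy j
  have hU'card : 2 * q ^ (d-1) ≤
      ((U.filter fun x => x (Fin.last d) = c).image
        (fun x => (x ∘ Fin.castSucc : Fin d → ZMod q))).card := by
    rw [Finset.card_image_of_injOn (fun x hx y hy h => hrinj x hx y hy h)]
    exact hc
  obtain ⟨W', hW'sub, hW'card, hW'sh⟩ := IH _ hU'card
  have hback : ∀ v ∈ ((U.filter fun x => x (Fin.last d) = c).image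
      (fun x => (x ∘ Fin.castSucc : Fin d → ZMod q))),
      (Fin.snoc v c : Fin (d+1) → ZMod q) ∈ (U.filter fun x => x (Fin.last d) = c) := by
    intro v hv
    obtain ⟨x, hx, rfl⟩ := Finset.mem_image.1 hv
    have hxc := (Finset.mem_filter.1 hx).2
    have : (Fin.snoc (x ∘ Fin.castSucc) c : Fin (d+1) → ZMod q) = x := by
      funext i
      refine Fin.lastCases ?_ ?_ i
      · simp [Fin.snoc_last, hxc]
      · intro j; simp [Fin.snoc_castSucc]
    rw [this]; exact hx
  have hsnocinj : Function.Injective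
      (fun v : Fin d → ZMod q => (Fin.snoc v c : Fin (d+1) → ZMod q)) := by
    intro v w h
    funext j
    simpa [Fin.snoc_castSucc] using congrFun h (Fin.castSucc j)
  refine ⟨W'.image (fun v => (Fin.snoc v c : Fin (d+1) → ZMod q)), ?_, ?_, ?_⟩
  · intro x hx
    obtain ⟨v, hv, rfl⟩ := Finset.mem_image.1 hx
    exact (Finset.mem_filter.1 (hback v (hW'sub hv))).1
  · rw [Finset.card_image_of_injective _ hsnocinj, hW'card]
  · intro S hS
    obtain ⟨u', hu'U', hu'⟩ := hW'sh
      (W'.filter (fun v => (Fin.snoc v c : Fin (d+1) → ZMod q) ∈ S))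
      (Finset.filter_subset _ _)
    refine ⟨Fin.snoc u' c, (Finset.mem_filter.1 (hback u' hu'U')).1, ?_⟩
    intro w hw
    obtain ⟨v, hv, rfl⟩ := Finset.mem_image.1 hw
    rw [snoc_adj]
    have hiff := hu' v hv
    constructor
    · intro hmem
      exact hiff.1 (Finset.mem_filter.2 ⟨hv, hmem⟩)
    · intro hadj
      exact (Finset.mem_filter.1 (hiff.2 hadj)).2

/-- if `d ≥ 2`, `q ≥ 4` and `U ⊆ V(H(d,q,2))` has `|U| ≥ 2q^(d-1)`,
then the VC-dimension of `(U, n(U))` is at least 2. -/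
theorem vc_dim_ge_two_Hdq2 (d q : ℕ) (hd : 2 ≤ d) (hq : 4 ≤ q)
    (U : Finset (Fin d → ZMod q)) (hU : 2 * q ^ (d - 1) ≤ U.card) :
    ∃ W ⊆ U, W.card = 2 ∧ Shatters 2 U W := by
  revert U
  induction d, hd using Nat.le_induction with
  | base =>
    intro U hU
    refine core2 hq U ?_
    have h1 : (2:ℕ) - 1 = 1 := rfl
    rwa [h1, pow_one] at hU
  | succ d hd IH =>
    intro U hU
    refine step hq (by omega) IH U ?_
    have h1 : d + 1 - 1 = d := by omega
    rwa [h1] at hU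
end

section
/- Let q ≥ 3 be a natural number and let U be a subset of the vertices of the Hamming graph H(2,q,2). Suppose there exist elements a, b, c, r, s, t, w of Z_q with a ≠ b, s ≠ r, t ≠ r, c ∉ {a, b}, and w ≠ r, such that the vertices (a, r), (b, r), (a, s), (b, t), and (c, w) all belong to U. Then the VC-dimension of (U, n(U)) is at least 2. -/
lemma hammingAdj_two_iff {q : ℕ} (x y : Fin 2 → ZMod q) :
    hammingAdj 2 x y ↔ x 0 ≠ y 0 ∧ x 1 ≠ y 1 := by
  unfold hammingAdj
  constructor
  · intro h
    have hfull : (Finset.univ.filter fun i => x i ≠ y i) = (Finset.univ : Finset (Fin 2)) := by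
      apply Finset.eq_of_subset_of_card_le (Finset.filter_subset _ _)
      simp [h]
    have h0 : (0 : Fin 2) ∈ Finset.univ.filter fun i => x i ≠ y i := by
      rw [hfull]; exact Finset.mem_univ _
    have h1 : (1 : Fin 2) ∈ Finset.univ.filter fun i => x i ≠ y i := by
      rw [hfull]; exact Finset.mem_univ _
    simp only [Finset.mem_filter] at h0 h1
    exact ⟨h0.2, h1.2⟩
  · rintro ⟨h0, h1⟩
    have : (Finset.univ.filter fun i => x i ≠ y i) = (Finset.univ : Finset (Fin 2)) := by
      ext i
      fin_cases i <;> simp [h0, h1]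
    rw [this]
    simp

/-- a row-pluck configuration together with an unrelated point in
`U ⊆ V(H(2,q,2))` (with `q ≥ 3`) forces the VC-dimension of `(U, n(U))` to be
at least 2. -/
theorem vc_dim_ge_two_of_row_pluck (q : ℕ) (hq : 3 ≤ q)
    (U : Finset (Fin 2 → ZMod q))
    (a b c r s t w : ZMod q)
    (hab : a ≠ b) (hsr : s ≠ r) (htr : t ≠ r)
    (hca : c ≠ a) (hcb : c ≠ b) (hwr : w ≠ r)
    (h₁ : ![a, r] ∈ U) (h₂ : ![b, r] ∈ U) (h₃ : ![a, s] ∈ U)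
    (h₄ : ![b, t] ∈ U) (h₅ : ![c, w] ∈ U) :
    ∃ W ⊆ U, W.card = 2 ∧ Shatters 2 U W := by
  have hne : (![a, r] : Fin 2 → ZMod q) ≠ ![b, r] := by
    intro h
    exact hab (congrFun h 0)
  refine ⟨{![a, r], ![b, r]}, ?_, ?_, ?_⟩
  · intro x hx
    simp only [Finset.mem_insert, Finset.mem_singleton] at hx
    rcases hx with h | h <;> subst h <;> assumption
  · rw [Finset.card_insert_of_notMem (by simpa using hne), Finset.card_singleton]
  · intro S hS
    have hmem : ∀ x ∈ S, x = ![a, r] ∨ x = ![b, r] := by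
      intro x hx
      have := hS hx
      simpa using this
    by_cases hp : ![a, r] ∈ S <;> by_cases hq' : ![b, r] ∈ S
    · refine ⟨![c, w], h₅, ?_⟩
      intro x hx
      simp only [Finset.mem_insert, Finset.mem_singleton] at hx
      rcases hx with h | h <;> subst h <;>
        simp [hammingAdj_two_iff, hp, hq', hca, hcb, hwr]
    · refine ⟨![b, t], h₄, ?_⟩
      intro x hx
      simp only [Finset.mem_insert, Finset.mem_singleton] at hx
      rcases hx with h | h <;> subst h <;>
        simp [hammingAdj_two_iff, hp, hq', Ne.symm hab, htr]
    · refine ⟨![a, s], h₃, ?_⟩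
      intro x hx
      simp only [Finset.mem_insert, Finset.mem_singleton] at hx
      rcases hx with h | h <;> subst h <;>
        simp [hammingAdj_two_iff, hp, hq', hab, hsr]
    · refine ⟨![a, r], h₁, ?_⟩
      intro x hx
      simp only [Finset.mem_insert, Finset.mem_singleton] at hx
      rcases hx with h | h <;> subst h <;>
        simp [hammingAdj_two_iff, hp, hq']
end
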